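/- arXiv:1903.10796 — 2 statements merged into one kernel-verified Lean document; each statement's English description precedes it below -/
import Mathlib

section
/- Let G=(V,w,m) be a connected, locally finite weighted graph satisfying Deg_max < ∞, q_min > 0, and κ(x,y) ≥ 0 for all x ≠ y ∈ V. Then G has the Liouville property: every bounded harmonic function f : V → ℝ is constant. -/
open scoped BigOperators

/-- A weighted graph `G = (V, w, m)`: a symmetric edge-weight function `w`
vanishing on the diagonal, a positive vertex measure `m`, and local finiteness. -/
structure WeightedGraph (V : Type*) where
  w : V → V → ℝ
  m : V → ℝ
  w_symm : ∀ x y, w x y = w y x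
  w_nonneg : ∀ x y, 0 ≤ w x y
  w_diag : ∀ x, w x x = 0
  m_pos : ∀ x, 0 < m x
  locFin : ∀ x, {y | 0 < w x y}.Finite

namespace WeightedGraph

variable {V : Type*} (G : WeightedGraph V)

/-- Adjacency: `x ~ y` iff `w x y > 0`. -/
def Adj (x y : V) : Prop := 0 < G.w x y

/-- The underlying simple graph. -/
def toSimpleGraph : SimpleGraph V where
  Adj x y := 0 < G.w x y
  symm := ⟨by intro x y h; rw [G.w_symm y x]; exact h⟩
  loopless := ⟨by intro x h; rw [G.w_diag] at h; exact lt_irrefl 0 h⟩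

/-- Combinatorial graph distance. -/
noncomputable def d (x y : V) : ℕ := G.toSimpleGraph.dist x y

/-- Transition rate `q(x,y) = w(x,y)/m(x)`. -/
noncomputable def q (x y : V) : ℝ := G.w x y / G.m x

/-- The graph Laplacian `Δf(x) = Σ_y q(x,y) (f(y) - f(x))`. -/
noncomputable def lap (f : V → ℝ) (x : V) : ℝ := ∑ᶠ y, G.q x y * (f y - f x)

/-- The weighted vertex degree `Deg(x) = Σ_y q(x,y)`. -/
noncomputable def Deg (x : V) : ℝ := ∑ᶠ y, G.q x y

/-- The maximal weighted vertex degree. -/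
noncomputable def DegMax : ℝ := ⨆ x, G.Deg x

/-- The minimal transition rate over edges, `q_min = inf_{x ~ y} q(x,y)`. -/
noncomputable def qMin : ℝ := sInf {r : ℝ | ∃ x y, G.Adj x y ∧ r = G.q x y}

/-- `‖∇f‖_∞ = sup_{x ~ y} (f x - f y)/d(x,y)`. -/
noncomputable def gradNorm (f : V → ℝ) : ℝ :=
  sSup {r : ℝ | ∃ x y, G.Adj x y ∧ r = (f x - f y) / (G.d x y : ℝ)}

/-- The Ollivier curvature
`κ(x,y) = inf { ∇_{xy} Δf : ∇_{yx} f = 1, ‖∇f‖_∞ = 1 }`. -/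
noncomputable def kappa (x y : V) : ℝ :=
  sInf {r : ℝ | ∃ f : V → ℝ,
    (f y - f x) / (G.d y x : ℝ) = 1 ∧ G.gradNorm f = 1 ∧
    r = (G.lap f x - G.lap f y) / (G.d x y : ℝ)}

/-- A function is harmonic if `Δf = 0`. -/
def Harmonic (f : V → ℝ) : Prop := ∀ x, G.lap f x = 0

/-- A transport plan between `x₀ ≠ y₀`: a nonnegative function supported on
`B₁(x₀) × B₁(y₀)` whose marginals on the spheres `S₁(x₀)`, `S₁(y₀)` are
`q(x₀,·)` and `q(y₀,·)` respectively. -/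
def IsTransportPlan (x₀ y₀ : V) (ρ : V → V → ℝ) : Prop :=
  (∀ x y, 0 ≤ ρ x y) ∧
  (∀ x y, ρ x y ≠ 0 → G.d x₀ x ≤ 1 ∧ G.d y₀ y ≤ 1) ∧
  (∀ x, G.d x₀ x = 1 → ∑ᶠ y, ρ x y = G.q x₀ x) ∧
  (∀ y, G.d y₀ y = 1 → ∑ᶠ x, ρ x y = G.q y₀ y)

/-- The transport functional `Σ_{x,y} ρ(x,y) (1 - d(x,y)/d(x₀,y₀))`. -/
noncomputable def transportCost (x₀ y₀ : V) (ρ : V → V → ℝ) : ℝ :=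
  ∑ᶠ x, ∑ᶠ y, ρ x y * (1 - (G.d x y : ℝ) / (G.d x₀ y₀ : ℝ))

/-- An optimal transport plan attains the supremum of the transport functional. -/
def IsOptimalTransportPlan (x₀ y₀ : V) (ρ : V → V → ℝ) : Prop :=
  G.IsTransportPlan x₀ y₀ ρ ∧
  ∀ ρ' : V → V → ℝ, G.IsTransportPlan x₀ y₀ ρ' →
    G.transportCost x₀ y₀ ρ' ≤ G.transportCost x₀ y₀ ρ

end WeightedGraph

namespace WeightedGraph

variable {V : Type*} (G : WeightedGraph V)

-- ============ auxiliary lemmas ============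

lemma adj_symm {x y : V} (h : G.Adj x y) : G.Adj y x := by
  unfold Adj at *; rwa [G.w_symm y x]

lemma adj_ne {x y : V} (h : G.Adj x y) : x ≠ y := by
  rintro rfl; unfold Adj at h; rw [G.w_diag] at h; exact lt_irrefl _ h

lemma q_nonneg (x y : V) : 0 ≤ G.q x y :=
  div_nonneg (G.w_nonneg x y) (G.m_pos x).le

lemma q_pos_of_adj {x y : V} (h : G.Adj x y) : 0 < G.q x y :=
  div_pos h (G.m_pos x)

lemma q_eq_zero {x y : V} (h : ¬ G.Adj x y) : G.q x y = 0 := by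
  have : G.w x y = 0 := le_antisymm (not_lt.1 h) (G.w_nonneg x y)
  simp [q, this]

noncomputable def nbr (x : V) : Finset V := (G.locFin x).toFinset

lemma mem_nbr {x y : V} : y ∈ G.nbr x ↔ G.Adj x y := by
  simp [nbr, Set.Finite.mem_toFinset, Adj]

lemma lap_eq_sum (f : V → ℝ) (x : V) :
    G.lap f x = ∑ y ∈ G.nbr x, G.q x y * (f y - f x) := by
  apply finsum_eq_sum_of_support_subset
  intro y hy
  simp only [Function.mem_support] at hy
  have hq : G.q x y ≠ 0 := fun h => hy (by simp [h])
  have : G.Adj x y := by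
    by_contra hn; exact hq (G.q_eq_zero hn)
  simpa [mem_nbr] using this

lemma Deg_eq_sum (x : V) : G.Deg x = ∑ y ∈ G.nbr x, G.q x y := by
  apply finsum_eq_sum_of_support_subset
  intro y hy
  simp only [Function.mem_support] at hy
  have : G.Adj x y := by
    by_contra hn; exact hy (G.q_eq_zero hn)
  simpa [mem_nbr] using this

lemma Deg_nonneg (x : V) : 0 ≤ G.Deg x := by
  rw [Deg_eq_sum]; exact Finset.sum_nonneg fun y _ => G.q_nonneg x y

lemma q_le_Deg {x y : V} (h : G.Adj x y) : G.q x y ≤ G.Deg x := by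
  rw [Deg_eq_sum]
  exact Finset.single_le_sum (fun z _ => G.q_nonneg x z) (G.mem_nbr.2 h)

lemma lap_add (f e : V → ℝ) (x : V) :
    G.lap (fun v => f v + e v) x = G.lap f x + G.lap e x := by
  rw [lap_eq_sum, lap_eq_sum, lap_eq_sum, ← Finset.sum_add_distrib]
  exact Finset.sum_congr rfl fun y _ => by ring

lemma d_eq_one {x y : V} (h : G.Adj x y) : G.d x y = 1 :=
  SimpleGraph.dist_eq_one_iff_adj.2 h

lemma edge_lip_of_gradNorm {φ : V → ℝ} (h : G.gradNorm φ = 1)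
    {a b : V} (hab : G.Adj a b) : φ a - φ b ≤ 1 := by
  set S := {r : ℝ | ∃ x y, G.Adj x y ∧ r = (φ x - φ y) / (G.d x y : ℝ)} with hS
  have hmem : φ a - φ b ∈ S := ⟨a, b, hab, by rw [G.d_eq_one hab]; simp⟩
  have hbdd : BddAbove S := by
    by_contra hn
    have := csSup_of_not_bddAbove hn
    rw [gradNorm] at h
    rw [← hS] at h
    rw [this, Real.sSup_empty] at h
    norm_num at h
  have := le_csSup hbdd hmem
  rwa [show sSup S = 1 from h] at this

lemma gradNorm_eq_one {φ : V → ℝ} (hLip : ∀ a b, G.Adj a b → φ a - φ b ≤ 1)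
    {a b : V} (hab : G.Adj a b) (h1 : φ a - φ b = 1) : G.gradNorm φ = 1 := by
  set S := {r : ℝ | ∃ x y, G.Adj x y ∧ r = (φ x - φ y) / (G.d x y : ℝ)} with hS
  have hmem : (1:ℝ) ∈ S := ⟨a, b, hab, by rw [G.d_eq_one hab]; simp [h1]⟩
  have hub : ∀ r ∈ S, r ≤ 1 := by
    rintro r ⟨u, v, huv, rfl⟩
    rw [G.d_eq_one huv]; simpa using hLip u v huv
  exact le_antisymm (csSup_le ⟨1, hmem⟩ hub) (le_csSup ⟨1, hub⟩ hmem)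

lemma abs_lap_le {D : ℝ} (hD : ∀ v, G.Deg v ≤ D) {φ : V → ℝ}
    (hLip : ∀ a b, G.Adj a b → φ a - φ b ≤ 1) (v : V) : |G.lap φ v| ≤ D := by
  rw [lap_eq_sum]
  calc |∑ y ∈ G.nbr v, G.q v y * (φ y - φ v)|
      ≤ ∑ y ∈ G.nbr v, |G.q v y * (φ y - φ v)| := Finset.abs_sum_le_sum_abs _ _
    _ ≤ ∑ y ∈ G.nbr v, G.q v y := by
        apply Finset.sum_le_sum
        intro y hy
        have hadj : G.Adj v y := G.mem_nbr.1 hy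
        rw [abs_mul, abs_of_nonneg (G.q_nonneg v y)]
        have h1 : |φ y - φ v| ≤ 1 :=
          abs_sub_le_iff.2 ⟨hLip y v (G.adj_symm hadj), hLip v y hadj⟩
        nlinarith [G.q_nonneg v y]
    _ = G.Deg v := (G.Deg_eq_sum v).symm
    _ ≤ D := hD v

lemma lap_le_of_kappa {D : ℝ} (hD : ∀ v, G.Deg v ≤ D) {x₀ y₀ : V}
    (hadj : G.Adj x₀ y₀) (hκ : 0 ≤ G.kappa x₀ y₀) {φ : V → ℝ}
    (hLip : ∀ a b, G.Adj a b → φ a - φ b ≤ 1) (hpair : φ y₀ - φ x₀ = 1) :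
    G.lap φ y₀ ≤ G.lap φ x₀ := by
  set S := {r : ℝ | ∃ f : V → ℝ,
    (f y₀ - f x₀) / (G.d y₀ x₀ : ℝ) = 1 ∧ G.gradNorm f = 1 ∧
    r = (G.lap f x₀ - G.lap f y₀) / (G.d x₀ y₀ : ℝ)} with hSdef
  have hd : G.d x₀ y₀ = 1 := G.d_eq_one hadj
  have hd' : G.d y₀ x₀ = 1 := G.d_eq_one (G.adj_symm hadj)
  have hgrad : G.gradNorm φ = 1 :=
    G.gradNorm_eq_one hLip (G.adj_symm hadj) hpair
  have hmem : G.lap φ x₀ - G.lap φ y₀ ∈ S := by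
    refine ⟨φ, ?_, hgrad, ?_⟩
    · rw [hd']; simp [hpair]
    · rw [hd]; simp
  have hbdd : BddBelow S := by
    refine ⟨-(D + D), ?_⟩
    rintro r ⟨h, hc1, hc2, rfl⟩
    have hLh : ∀ a b, G.Adj a b → h a - h b ≤ 1 :=
      fun a b hab => G.edge_lip_of_gradNorm hc2 hab
    have h1 := G.abs_lap_le hD hLh x₀
    have h2 := G.abs_lap_le hD hLh y₀
    rw [hd]
    simp only [Nat.cast_one, div_one]
    have := abs_le.1 h1
    have := abs_le.1 h2
    linarith [(abs_le.1 h1).1, (abs_le.1 h1).2, (abs_le.1 h2).1, (abs_le.1 h2).2]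
  have hle : G.kappa x₀ y₀ ≤ G.lap φ x₀ - G.lap φ y₀ := csInf_le hbdd hmem
  linarith

def dSet (g : V → ℝ) (x : V) : Set ℝ := {r | ∃ y, G.Adj x y ∧ r = g x - g y}

lemma dSet_finite (g : V → ℝ) (x : V) : (G.dSet g x).Finite := by
  have : G.dSet g x ⊆ (fun y => g x - g y) '' {y | 0 < G.w x y} := by
    rintro r ⟨y, hy, rfl⟩; exact ⟨y, hy, rfl⟩
  exact Set.Finite.subset ((G.locFin x).image _) this

noncomputable def bds (g : V → ℝ) (x : V) : ℝ := 1 - sSup (G.dSet g x)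

lemma exists_bds_witness (g : V → ℝ) {x : V} (hnbr : ∃ y, G.Adj x y) :
    ∃ y', G.Adj x y' ∧ g x - g y' = 1 - G.bds g x := by
  obtain ⟨y, hy⟩ := hnbr
  have hne : (G.dSet g x).Nonempty := ⟨g x - g y, y, hy, rfl⟩
  obtain ⟨y', hy', heq⟩ := hne.csSup_mem (G.dSet_finite g x)
  exact ⟨y', hy', by rw [bds]; linarith [heq.symm]⟩

lemma slack_le (g : V → ℝ) {x y : V} (hw : G.Adj x y) :
    g x - g y ≤ 1 - G.bds g x := by
  have := le_csSup (G.dSet_finite g x).bddAbove (⟨y, hw, rfl⟩ : g x - g y ∈ G.dSet g x)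
  rw [bds]; linarith

lemma bds_nonneg {g : V → ℝ} (hLip : ∀ a b, G.Adj a b → g a - g b ≤ 1)
    {x : V} (hnbr : ∃ y, G.Adj x y) : 0 ≤ G.bds g x := by
  obtain ⟨y', hy', heq⟩ := G.exists_bds_witness g hnbr
  have := hLip x y' hy'
  linarith

set_option maxHeartbeats 1000000 in
lemma step (hκ : ∀ x y : V, x ≠ y → 0 ≤ G.kappa x y) {D q₀ : ℝ}
    (hD : ∀ v, G.Deg v ≤ D) (hq₀ : ∀ a b, G.Adj a b → q₀ ≤ G.q a b)
    (hq₀pos : 0 < q₀) (hq₀D : q₀ ≤ D)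
    {g : V → ℝ} (hharm : ∀ v, G.lap g v = 0)
    (hLip : ∀ a b, G.Adj a b → g a - g b ≤ 1)
    {x : V} (hnbr : ∃ y, G.Adj x y)
    (hδ : G.bds g x ≤ q₀ / (8 * D)) :
    ∃ z, G.Adj x z ∧ q₀ / (4 * D) ≤ g z - g x ∧
      G.bds g z ≤ 16 * D / q₀ * G.bds g x := by
  classical
  set β := q₀ / (4 * D) with hβ
  set K := 16 * D / q₀ with hK
  set δ := G.bds g x with hδdef
  have hD0 : 0 < D := lt_of_lt_of_le hq₀pos hq₀D
  have hδ0 : 0 ≤ δ := G.bds_nonneg hLip hnbr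
  have hβpos : 0 < β := by rw [hβ]; positivity
  have hδβ : δ < β := lt_of_le_of_lt hδ (by
    rw [hβ]
    apply div_lt_div_of_pos_left hq₀pos (by positivity)
    nlinarith)
  have hδ18 : δ ≤ 8⁻¹ := le_trans hδ (by
    rw [div_le_iff₀ (by positivity)]; nlinarith)
  obtain ⟨y', hy'adj, hy'eq⟩ := G.exists_bds_witness g hnbr
  by_contra hcon
  push_neg at hcon
  set U : Finset V := (G.nbr x).filter (fun z => β ≤ g z - g x) with hU
  set Qp := ∑ z ∈ U, G.q x z with hQp
  have h0 : ∑ z ∈ G.nbr x, G.q x z * (g z - g x) = 0 := by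
    rw [← lap_eq_sum]; exact hharm x
  have hsplit := Finset.sum_filter_add_sum_filter_not (G.nbr x)
    (fun z => β ≤ g z - g x) (fun z => G.q x z * (g z - g x))
  set W := (G.nbr x).filter (fun z => ¬ (β ≤ g z - g x)) with hW
  have hy'mem : y' ∈ W := by
    rw [hW, Finset.mem_filter]
    refine ⟨G.mem_nbr.2 hy'adj, ?_⟩
    push_neg
    nlinarith
  have hA : ∑ z ∈ U, G.q x z * (g z - g x) ≤ Qp := by
    rw [hQp]
    apply Finset.sum_le_sum
    intro z hz
    have hadj : G.Adj x z := G.mem_nbr.1 (Finset.mem_filter.1 hz).1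
    have := hLip z x (G.adj_symm hadj)
    nlinarith [G.q_nonneg x z]
  have hWsum : ∑ z ∈ W, G.q x z * (g z - g x) ≤ D * β + G.q x y' * (δ - 1) := by
    have herase := Finset.sum_erase_add W (fun z => G.q x z * (g z - g x)) hy'mem
    have hb1 : ∑ z ∈ W.erase y', G.q x z * (g z - g x)
        ≤ ∑ z ∈ W.erase y', G.q x z * β := by
      apply Finset.sum_le_sum
      intro z hz
      have hzW := Finset.mem_of_mem_erase hz
      have hzb : g z - g x < β := not_le.1 (Finset.mem_filter.1 hzW).2
      exact mul_le_mul_of_nonneg_left hzb.le (G.q_nonneg x z)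
    have hb2 : ∑ z ∈ W.erase y', G.q x z * β ≤ D * β := by
      rw [← Finset.sum_mul]
      have hsub : W.erase y' ⊆ G.nbr x :=
        (Finset.erase_subset _ _).trans (Finset.filter_subset _ _)
      have hsum : ∑ z ∈ W.erase y', G.q x z ≤ G.Deg x := by
        rw [Deg_eq_sum]
        exact Finset.sum_le_sum_of_subset_of_nonneg hsub
          (fun z _ _ => G.q_nonneg x z)
      nlinarith [hD x, G.Deg_nonneg x]
    have hgy' : g y' - g x = δ - 1 := by linarith
    have hgy2 : G.q x y' * (g y' - g x) = G.q x y' * (δ - 1) := by rw [hgy']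
    linarith
  have hQplb : q₀ / 4 ≤ Qp := by
    have hq' : q₀ ≤ G.q x y' := hq₀ _ _ hy'adj
    have hDβ : D * β = q₀ / 4 := by rw [hβ]; field_simp
    have hzero : (∑ z ∈ U, G.q x z * (g z - g x))
        + ∑ z ∈ W, G.q x z * (g z - g x) = 0 := by
      rw [hU, hW]; rw [hsplit]; exact h0
    nlinarith
  have hUne : U.Nonempty := by
    by_contra h
    rw [Finset.not_nonempty_iff_eq_empty] at h
    have : Qp = 0 := by rw [hQp, h, Finset.sum_empty]
    nlinarith
  set ε : ℝ := U.inf' hUne (G.bds g) with hε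
  obtain ⟨z₀, hz₀U, hz₀eq⟩ := Finset.exists_mem_eq_inf' hUne (G.bds g)
  have hz₀adj : G.Adj x z₀ := G.mem_nbr.1 (Finset.mem_filter.1 hz₀U).1
  have hεK : K * δ < ε := by
    rw [hε, hz₀eq]
    exact hcon z₀ hz₀adj (Finset.mem_filter.1 hz₀U).2
  have hK0 : 0 ≤ K := by rw [hK]; positivity
  have hε0 : 0 ≤ ε := le_trans (mul_nonneg hK0 hδ0) hεK.le
  have hεle : ∀ z ∈ U, ε ≤ G.bds g z := fun z hz => Finset.inf'_le _ hz
  set e : V → ℝ := fun v => if v = x then δ else if v ∈ U then ε else 0 with he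
  have hex : e x = δ := by simp [he]
  have hy'x : y' ≠ x := (G.adj_ne hy'adj).symm
  have hy'U : y' ∉ U := by
    rw [hU, Finset.mem_filter]
    rintro ⟨-, h2⟩
    nlinarith
  have hey' : e y' = 0 := by simp [he, hy'x, hy'U]
  have heU : ∀ z ∈ U, e z = ε := by
    intro z hz
    have : z ≠ x := (G.adj_ne (G.mem_nbr.1 (Finset.mem_filter.1 hz).1)).symm
    simp [he, this, hz]
  have henn : ∀ v, 0 ≤ e v := by
    intro v; rw [he]; dsimp only
    split_ifs
    exacts [hδ0, hε0, le_refl 0]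
  set φ : V → ℝ := fun v => g v + e v with hφ
  have hφLip : ∀ a b, G.Adj a b → φ a - φ b ≤ 1 := by
    intro a b hab
    have hge := henn b
    simp only [hφ]
    rcases eq_or_ne a x with rfl | hax
    · have := G.slack_le g hab
      rw [hex]
      simp only [← hδdef] at this ⊢
      linarith
    · by_cases haU : a ∈ U
      · have h1 : g a - g b ≤ 1 - G.bds g a := G.slack_le g hab
        have h2 : ε ≤ G.bds g a := hεle a haU
        rw [heU a haU]
        linarith
      · have h3 : e a = 0 := by simp [he, hax, haU]
        have := hLip a b hab
        rw [h3]
        linarith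
  have hpair : φ x - φ y' = 1 := by
    simp only [hφ]; rw [hex, hey']; linarith
  have hκ0 : 0 ≤ G.kappa y' x := hκ y' x hy'x
  have hlap := G.lap_le_of_kappa hD (G.adj_symm hy'adj) hκ0 hφLip hpair
  have hlapφ : ∀ v, G.lap φ v = G.lap e v := by
    intro v
    have := G.lap_add g e v
    simp only [hφ]
    rw [this, hharm v]; ring
  rw [hlapφ, hlapφ] at hlap
  have hub : G.lap e y' ≤ D * δ := by
    rw [lap_eq_sum]
    have hterm : ∀ z ∈ G.nbr y',
        G.q y' z * (e z - e y') ≤ (if z = x then G.q y' z * δ else 0) := by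
      intro z hz
      rw [hey', sub_zero]
      by_cases hzx : z = x
      · subst hzx; simp [hex]
      · have hz0 : e z = 0 := by
          by_cases hzU : z ∈ U
          · exfalso
            have hzadj : G.Adj y' z := G.mem_nbr.1 hz
            have h1 : g z - g y' ≤ 1 := hLip z y' (G.adj_symm hzadj)
            have h2 : β ≤ g z - g x := (Finset.mem_filter.1 hzU).2
            linarith
          · simp [he, hzx, hzU]
        rw [hz0, if_neg hzx, mul_zero]
    calc ∑ z ∈ G.nbr y', G.q y' z * (e z - e y')
        ≤ ∑ z ∈ G.nbr y', (if z = x then G.q y' z * δ else 0) :=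
          Finset.sum_le_sum hterm
      _ = if x ∈ G.nbr y' then G.q y' x * δ else 0 :=
          Finset.sum_ite_eq' (G.nbr y') x (fun z => G.q y' z * δ)
      _ ≤ D * δ := by
          split_ifs with hmem
          · have : G.q y' x ≤ D := le_trans (G.q_le_Deg (G.mem_nbr.1 hmem)) (hD y')
            nlinarith [G.q_nonneg y' x]
          · exact mul_nonneg hD0.le hδ0
  have hlb : Qp * ε - D * δ ≤ G.lap e x := by
    rw [lap_eq_sum]
    have hsum1 : ∑ z ∈ G.nbr x, G.q x z * (e z - e x)
        = (∑ z ∈ G.nbr x, G.q x z * e z) - G.Deg x * δ := by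
      rw [Deg_eq_sum, Finset.sum_mul, ← Finset.sum_sub_distrib]
      apply Finset.sum_congr rfl
      intro z _
      rw [hex]; ring
    have h2 : Qp * ε ≤ ∑ z ∈ G.nbr x, G.q x z * e z := by
      have heq : ∑ z ∈ U, G.q x z * e z = Qp * ε := by
        rw [hQp, Finset.sum_mul]
        apply Finset.sum_congr rfl
        intro z hz
        rw [heU z hz]
      rw [← heq]
      apply Finset.sum_le_sum_of_subset_of_nonneg (Finset.filter_subset _ _)
      intro z _ _
      exact mul_nonneg (G.q_nonneg x z) (henn z)
    have h3 : G.Deg x * δ ≤ D * δ := mul_le_mul_of_nonneg_right (hD x) hδ0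
    rw [hsum1]
    linarith
  have hchain : Qp * ε ≤ 2 * (D * δ) := by linarith
  have h5 : q₀ / 4 * ε ≤ Qp * ε := mul_le_mul_of_nonneg_right hQplb hε0
  have h7 : q₀ / 4 * (K * δ) = 4 * (D * δ) := by rw [hK]; field_simp; ring
  have hδle : δ ≤ 0 := by nlinarith
  have hδeq : δ = 0 := le_antisymm hδle hδ0
  have hεpos : 0 < ε := by rw [hδeq] at hεK; simpa using hεK
  rw [hδeq] at hchain
  nlinarith

lemma iter (hκ : ∀ x y : V, x ≠ y → 0 ≤ G.kappa x y) {D q₀ : ℝ}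
    (hD : ∀ v, G.Deg v ≤ D) (hq₀ : ∀ a b, G.Adj a b → q₀ ≤ G.q a b)
    (hq₀pos : 0 < q₀) (hq₀D : q₀ ≤ D)
    {g : V → ℝ} (hharm : ∀ v, G.lap g v = 0)
    (hLip : ∀ a b, G.Adj a b → g a - g b ≤ 1) :
    ∀ (k : ℕ) (x : V), (∃ y, G.Adj x y) →
      G.bds g x ≤ q₀ / (8 * D) / (16 * D / q₀) ^ k →
      ∃ x', g x + k * (q₀ / (4 * D)) ≤ g x' := by
  have hD0 : 0 < D := lt_of_lt_of_le hq₀pos hq₀D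
  have hK1 : (1:ℝ) ≤ 16 * D / q₀ := by
    rw [le_div_iff₀ hq₀pos]; nlinarith
  intro k
  induction k with
  | zero => intro x _ _; exact ⟨x, by simp⟩
  | succ k ih =>
    intro x hnbr hbds
    have hKpow : (1:ℝ) ≤ (16 * D / q₀) ^ (k+1) := one_le_pow₀ hK1
    have hstep := G.step hκ hD hq₀ hq₀pos hq₀D hharm hLip hnbr
      (le_trans hbds (by
        apply div_le_self (by positivity) hKpow))
    obtain ⟨z, hzadj, hzval, hzbds⟩ := hstep
    have hbds' : G.bds g z ≤ q₀ / (8 * D) / (16 * D / q₀) ^ k := by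
      have hKne : (16 * D / q₀) ≠ 0 := by positivity
      have : 16 * D / q₀ * (q₀ / (8 * D) / (16 * D / q₀) ^ (k+1))
          = q₀ / (8 * D) / (16 * D / q₀) ^ k := by
        rw [pow_succ]
        field_simp
      calc G.bds g z ≤ 16 * D / q₀ * G.bds g x := hzbds
        _ ≤ 16 * D / q₀ * (q₀ / (8 * D) / (16 * D / q₀) ^ (k+1)) := by
            apply mul_le_mul_of_nonneg_left hbds (by positivity)
        _ = q₀ / (8 * D) / (16 * D / q₀) ^ k := this
    obtain ⟨x', hx'⟩ := ih z ⟨x, G.adj_symm hzadj⟩ hbds'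
    refine ⟨x', ?_⟩
    push_cast
    push_cast at hx'
    linarith

lemma eq_of_locally_const (hconn : G.toSimpleGraph.Connected) {f : V → ℝ}
    (hloc : ∀ a b, G.Adj a b → f a = f b) (x y : V) : f x = f y := by
  obtain ⟨p⟩ := (hconn x y)
  induction p with
  | nil => rfl
  | cons h p ih => exact (hloc _ _ h).trans ih

lemma liouville_main (hconn : G.toSimpleGraph.Connected)
    (hDeg : BddAbove (Set.range G.Deg))
    (hq : 0 < G.qMin)
    (hκ : ∀ x y : V, x ≠ y → 0 ≤ G.kappa x y)
    (f : V → ℝ) (hharm : ∀ v, G.lap f v = 0)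
    (hbdd : ∃ C : ℝ, ∀ x, |f x| ≤ C) :
    ∀ x y : V, f x = f y := by
  classical
  by_contra hcon
  push_neg at hcon
  obtain ⟨x₁, y₁, hne⟩ := hcon
  -- there is an edge where f differs
  have hedge : ∃ a b, G.Adj a b ∧ f b < f a := by
    by_contra h
    push_neg at h
    have hloc : ∀ a b, G.Adj a b → f a = f b := by
      intro a b hab
      have h1 := h a b hab
      have h2 := h b a (G.adj_symm hab)
      linarith
    exact hne (G.eq_of_locally_const hconn hloc x₁ y₁)
  obtain ⟨a, b, hab, hfab⟩ := hedge
  obtain ⟨C, hC⟩ := hbdd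
  obtain ⟨D, hDub⟩ := hDeg
  have hD : ∀ v, G.Deg v ≤ D := fun v => hDub ⟨v, rfl⟩
  set q₀ := G.qMin with hq₀def
  have hq₀ : ∀ u v, G.Adj u v → q₀ ≤ G.q u v := by
    intro u v huv
    apply csInf_le
    · refine ⟨0, ?_⟩
      rintro r ⟨u', v', _, rfl⟩
      exact G.q_nonneg u' v'
    · exact ⟨u, v, huv, rfl⟩
  have hq₀pos : 0 < q₀ := hq
  have hq₀D : q₀ ≤ D := le_trans (hq₀ a b hab) (le_trans (G.q_le_Deg hab) (hD a))
  have hD0 : 0 < D := lt_of_lt_of_le hq₀pos hq₀D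
  -- the sup of edge differences
  set S : Set ℝ := {r | ∃ u v, G.Adj u v ∧ r = f u - f v} with hSdef
  have hSne : S.Nonempty := ⟨f a - f b, a, b, hab, rfl⟩
  have hSbdd : BddAbove S := by
    refine ⟨2 * C, ?_⟩
    rintro r ⟨u, v, _, rfl⟩
    have h1 := hC u
    have h2 := hC v
    have := abs_le.1 h1
    have := abs_le.1 h2
    linarith [(abs_le.1 h1).2, (abs_le.1 h2).1]
  set L := sSup S with hLdef
  have hL0 : 0 < L := lt_of_lt_of_le (by linarith) (le_csSup hSbdd ⟨a, b, hab, rfl⟩)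
  set g : V → ℝ := fun v => f v / L with hg
  have hgharm : ∀ v, G.lap g v = 0 := by
    intro v
    rw [lap_eq_sum]
    have : ∀ z ∈ G.nbr v, G.q v z * (g z - g v) = (G.q v z * (f z - f v)) / L := by
      intro z _
      simp only [hg]
      field_simp
    rw [Finset.sum_congr rfl this, ← Finset.sum_div, ← lap_eq_sum, hharm v]
    simp
  have hgLip : ∀ u v, G.Adj u v → g u - g v ≤ 1 := by
    intro u v huv
    have h1 : f u - f v ≤ L := le_csSup hSbdd ⟨u, v, huv, rfl⟩
    simp only [hg]
    rw [div_sub_div_same, div_le_one hL0]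
    exact h1
  have hgbdd : ∀ v, |g v| ≤ C / L := by
    intro v
    simp only [hg]
    rw [abs_div, abs_of_pos hL0]
    exact div_le_div_of_nonneg_right (hC v) hL0.le
  set β := q₀ / (4 * D) with hβ
  have hβpos : 0 < β := by rw [hβ]; positivity
  obtain ⟨n, hn⟩ := exists_nat_gt ((2 * C / L) / β)
  have hn2 : 2 * C / L < n * β := by rwa [div_lt_iff₀ hβpos] at hn
  set δn := q₀ / (8 * D) / (16 * D / q₀) ^ n with hδn
  have hδnpos : 0 < δn := by rw [hδn]; positivity
  have hedge2 : ∃ u v, G.Adj u v ∧ 1 - δn < g u - g v := by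
    by_contra h
    push_neg at h
    have hub : ∀ r ∈ S, r ≤ L * (1 - δn) := by
      rintro r ⟨u, v, huv, rfl⟩
      have h1 := h u v huv
      have h2 : f u - f v = L * (g u - g v) := by
        simp only [hg]; field_simp
      rw [h2]
      nlinarith
    have hLle := csSup_le hSne hub
    rw [← hLdef] at hLle
    nlinarith
  obtain ⟨u, v, huv, hguv⟩ := hedge2
  have hbdsu : G.bds g u ≤ δn := by
    have hmem : g u - g v ∈ G.dSet g u := ⟨v, huv, rfl⟩
    have hle := le_csSup (G.dSet_finite g u).bddAbove hmem
    rw [bds]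
    linarith
  obtain ⟨x', hx'⟩ := G.iter hκ hD hq₀ hq₀pos hq₀D hgharm hgLip n u ⟨v, huv⟩ hbdsu
  rw [← hβ] at hx'
  have h1 := abs_le.1 (hgbdd x')
  have h2 := abs_le.1 (hgbdd u)
  have h3 : 2 * C / L = C / L + C / L := by ring
  linarith [h1.2, h2.1]

end WeightedGraph


/-- **Liouville property.** A connected, locally finite weighted
graph with `Deg_max < ∞`, `q_min > 0`, and nonnegative Ollivier curvature
`κ(x,y) ≥ 0` for all `x ≠ y` has the Liouville property: every bounded
harmonic function is constant. -/
theorem liouville_of_nonneg_ollivier_curvature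
    {V : Type*} [Countable V] (G : WeightedGraph V)
    (hconn : G.toSimpleGraph.Connected)
    (hDeg : BddAbove (Set.range G.Deg))
    (hq : 0 < G.qMin)
    (hκ : ∀ x y : V, x ≠ y → 0 ≤ G.kappa x y)
    (f : V → ℝ) (hharm : G.Harmonic f)
    (hbdd : ∃ C : ℝ, ∀ x, |f x| ≤ C) :
    ∀ x y : V, f x = f y := by
  intro x y
  exact G.liouville_main hconn hDeg hq hκ f hharm hbdd x y
end

section
/- Let G=(V,w,m) be a finite connected weighted graph with m(V) = 1, Deg_max ≤ 1, and κ(x,y) ≥ K > 0 for all x ≠ y ∈ V. Let f : V → ℝ satisfy ⟨f⟩ = 0 and ‖∇f‖_∞ ≤ 1. Then for every r > 0, m({x ∈ V : f(x) > r}) ≤ e^{−K r²}. -/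
open scoped Classical
set_option linter.unusedSectionVars false

/-- core scalar inequality: `2(e^h - 1) ≤ h (1 + e^h)` for `h ≥ 0`. -/
lemma two_expm1_le (h : ℝ) (hh : 0 ≤ h) : 2 * (Real.exp h - 1) ≤ h * (1 + Real.exp h) := by
  have key : ∀ s : ℝ, 0 ≤ s → 0 ≤ 1 - Real.exp s + s * Real.exp s := by
    intro s hs
    set χ : ℝ → ℝ := fun u => 1 - Real.exp u + u * Real.exp u with hχ
    have hd : ∀ u : ℝ, HasDerivAt χ (u * Real.exp u) u := by
      intro u
      have h1 : HasDerivAt (fun v : ℝ => Real.exp v) (Real.exp u) u := Real.hasDerivAt_exp u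
      have h2 : HasDerivAt (fun v : ℝ => v * Real.exp v) (1 * Real.exp u + u * Real.exp u) u :=
        (hasDerivAt_id u).mul h1
      have h3 : HasDerivAt χ (0 - Real.exp u + (1 * Real.exp u + u * Real.exp u)) u :=
        ((hasDerivAt_const u (1:ℝ)).sub h1).add h2
      convert h3 using 1; ring
    have hmono : MonotoneOn χ (Set.Ici (0:ℝ)) := by
      apply monotoneOn_of_deriv_nonneg (convex_Ici 0)
      · exact ((continuous_const.sub Real.continuous_exp).add
          (continuous_id.mul Real.continuous_exp)).continuousOn
      · intro u _
        exact (hd u).differentiableAt.differentiableWithinAt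
      · intro u hu
        rw [(hd u).deriv]
        have : 0 < u := by simpa [interior_Ici] using hu
        positivity
    have h0 : χ 0 = 0 := by simp [hχ]
    have := hmono (Set.self_mem_Ici) (Set.mem_Ici.2 hs) hs
    rw [h0] at this
    exact this
  set χ : ℝ → ℝ := fun u => u * (1 + Real.exp u) - 2 * (Real.exp u - 1) with hχ
  have hd : ∀ u : ℝ, HasDerivAt χ (1 - Real.exp u + u * Real.exp u) u := by
    intro u
    have h1 : HasDerivAt (fun v : ℝ => Real.exp v) (Real.exp u) u := Real.hasDerivAt_exp u
    have h2 : HasDerivAt (fun v : ℝ => v * (1 + Real.exp v))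
        (1 * (1 + Real.exp u) + u * Real.exp u) u := by
      have := (hasDerivAt_id' u).mul (h1.const_add (1:ℝ))
      exact this
    have h3 : HasDerivAt χ (1 * (1 + Real.exp u) + u * Real.exp u - 2 * Real.exp u) u :=
      h2.sub ((h1.sub_const 1).const_mul 2)
    convert h3 using 1; ring
  have hmono : MonotoneOn χ (Set.Ici (0:ℝ)) := by
    apply monotoneOn_of_deriv_nonneg (convex_Ici 0)
    · have : Continuous χ := by
        apply Continuous.sub
        · exact continuous_id.mul (continuous_const.add Real.continuous_exp)
        · exact continuous_const.mul (Real.continuous_exp.sub continuous_const)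
      exact this.continuousOn
    · intro u _; exact (hd u).differentiableAt.differentiableWithinAt
    · intro u hu
      rw [(hd u).deriv]
      exact key u (le_of_lt (by simpa [interior_Ici] using hu))
  have h0 : χ 0 = 0 := by simp [hχ]
  have := hmono (Set.self_mem_Ici) (Set.mem_Ici.2 hh) hh
  rw [h0] at this
  simp only [hχ] at this
  linarith

private lemma diff_mul_exp_helper (l M a b : ℝ) (hl : 0 ≤ l) (hab : a ≤ b) (hM : b - a ≤ M) :
    (b - a) * (Real.exp (l * b) - Real.exp (l * a)) ≤
      l / 2 * M ^ 2 * (Real.exp (l * a) + Real.exp (l * b)) := by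
  have hM0 : 0 ≤ M := le_trans (by linarith) hM
  have h := two_expm1_le (l * (b - a)) (mul_nonneg hl (by linarith))
  have hprod : Real.exp (l * a) * Real.exp (l * (b - a)) = Real.exp (l * b) := by
    rw [← Real.exp_add]; ring_nf
  have hexp : Real.exp (l * b) - Real.exp (l * a)
      = Real.exp (l * a) * (Real.exp (l * (b - a)) - 1) := by
    rw [mul_sub, mul_one, hprod]
  have hstep : Real.exp (l * b) - Real.exp (l * a)
      ≤ l * (b - a) * (Real.exp (l * a) + Real.exp (l * b)) / 2 := by
    rw [hexp]
    have e1 : Real.exp (l * a) * (Real.exp (l * (b - a)) - 1)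
        ≤ Real.exp (l * a) * (l * (b - a) * (1 + Real.exp (l * (b - a))) / 2) := by
      apply mul_le_mul_of_nonneg_left _ (le_of_lt (Real.exp_pos _))
      linarith
    refine e1.trans (le_of_eq ?_)
    rw [← hprod]; ring
  have hS : 0 ≤ Real.exp (l * a) + Real.exp (l * b) := by positivity
  calc (b - a) * (Real.exp (l * b) - Real.exp (l * a))
      ≤ (b - a) * (l * (b - a) * (Real.exp (l * a) + Real.exp (l * b)) / 2) :=
        mul_le_mul_of_nonneg_left hstep (by linarith)
    _ = l / 2 * (b - a) ^ 2 * (Real.exp (l * a) + Real.exp (l * b)) := by ring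
    _ ≤ l / 2 * M ^ 2 * (Real.exp (l * a) + Real.exp (l * b)) := by
        have hsq : (b - a) ^ 2 ≤ M ^ 2 := by nlinarith
        nlinarith [mul_le_mul_of_nonneg_left (mul_le_mul_of_nonneg_right hsq hS)
          (div_nonneg hl (by norm_num : (0:ℝ) ≤ 2))]

/-- the symmetrized consequence we use. -/
lemma diff_mul_exp_diff_le (l M a b : ℝ) (hl : 0 ≤ l) (hM : |b - a| ≤ M) :
    (b - a) * (Real.exp (l * b) - Real.exp (l * a)) ≤
      l / 2 * M ^ 2 * (Real.exp (l * a) + Real.exp (l * b)) := by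
  rcases le_total a b with hab | hab
  · exact diff_mul_exp_helper l M a b hl hab (by rw [abs_of_nonneg (by linarith)] at hM; exact hM)
  · have hM' : a - b ≤ M := by rw [abs_sub_comm, abs_of_nonneg (by linarith)] at hM; exact hM
    calc (b - a) * (Real.exp (l * b) - Real.exp (l * a))
        = (a - b) * (Real.exp (l * a) - Real.exp (l * b)) := by ring
      _ ≤ l / 2 * M ^ 2 * (Real.exp (l * b) + Real.exp (l * a)) :=
          diff_mul_exp_helper l M b a hl hab hM'
      _ = l / 2 * M ^ 2 * (Real.exp (l * a) + Real.exp (l * b)) := by ring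


open scoped BigOperators

open scoped Classical

namespace ConcAux

variable {V : Type*} [Fintype V] (G : WeightedGraph V)

lemma q_nonneg (x y : V) : 0 ≤ G.q x y := div_nonneg (G.w_nonneg x y) (G.m_pos x).le

lemma q_pos_iff {x y : V} : 0 < G.q x y ↔ 0 < G.w x y := by
  constructor
  · intro h
    by_contra hw
    have : G.w x y = 0 := le_antisymm (not_lt.mp hw) (G.w_nonneg x y)
    simp [WeightedGraph.q, this] at h
  · intro h; exact div_pos h (G.m_pos x)

lemma adj_symm {x y : V} (h : G.toSimpleGraph.Adj x y) : G.toSimpleGraph.Adj y x :=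
  h.symm

lemma adj_iff_q_pos {x y : V} : G.toSimpleGraph.Adj x y ↔ 0 < G.q x y := q_pos_iff G |>.symm

lemma ne_of_adj {x y : V} (h : G.toSimpleGraph.Adj x y) : x ≠ y := G.toSimpleGraph.ne_of_adj h

lemma d_adj {x y : V} (h : G.toSimpleGraph.Adj x y) : G.d x y = 1 :=
  SimpleGraph.dist_eq_one_iff_adj.mpr h

lemma lap_eq_sum (g : V → ℝ) (x : V) : G.lap g x = ∑ y, G.q x y * (g y - g x) := by
  rw [WeightedGraph.lap, finsum_eq_sum_of_fintype]

lemma Deg_eq_sum (x : V) : G.Deg x = ∑ y, G.q x y := by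
  rw [WeightedGraph.Deg, finsum_eq_sum_of_fintype]

lemma m_mul_q (x y : V) : G.m x * G.q x y = G.w x y := by
  rw [WeightedGraph.q, mul_div_cancel₀ _ (G.m_pos x).ne']

/-- the Laplacian as a linear map -/
noncomputable def lapL : (V → ℝ) →ₗ[ℝ] (V → ℝ) where
  toFun g := fun x => ∑ y, G.q x y * (g y - g x)
  map_add' g h := by
    funext x
    show (∑ y, G.q x y * ((g y + h y) - (g x + h x)))
      = (∑ y, G.q x y * (g y - g x)) + ∑ y, G.q x y * (h y - h x)
    rw [← Finset.sum_add_distrib]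
    exact Finset.sum_congr rfl fun y _ => by ring
  map_smul' c g := by
    funext x
    show (∑ y, G.q x y * (c * g y - c * g x)) = c * ∑ y, G.q x y * (g y - g x)
    rw [Finset.mul_sum]
    exact Finset.sum_congr rfl fun y _ => by ring

/-- the Laplacian as a continuous linear map -/
noncomputable def lapC : (V → ℝ) →L[ℝ] (V → ℝ) := LinearMap.toContinuousLinearMap (lapL G)

lemma lapC_apply (g : V → ℝ) (x : V) : lapC G g x = ∑ y, G.q x y * (g y - g x) := rfl

lemma lap_eq_lapC (g : V → ℝ) (x : V) : G.lap g x = lapC G g x := by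
  rw [lap_eq_sum, lapC_apply]

/-- the heat semigroup -/
noncomputable def heat (t : ℝ) : (V → ℝ) →L[ℝ] (V → ℝ) :=
  NormedSpace.exp (t • lapC G)

lemma heat_zero (g : V → ℝ) : heat G 0 g = g := by
  rw [heat, zero_smul, NormedSpace.exp_zero]
  rfl

lemma heat_hasDerivAt (g : V → ℝ) (x : V) (t : ℝ) :
    HasDerivAt (fun s => heat G s g x) (lapC G (heat G t g) x) t := by
  have h1 : HasDerivAt (fun s : ℝ => NormedSpace.exp (s • lapC G))
      (lapC G * NormedSpace.exp (t • lapC G)) t := hasDerivAt_exp_smul_const' (𝕂 := ℝ) (lapC G) t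
  set Φ : ((V → ℝ) →L[ℝ] (V → ℝ)) →L[ℝ] ℝ :=
    (ContinuousLinearMap.proj x).comp (ContinuousLinearMap.apply ℝ (V → ℝ) g) with hΦ
  have h2 := (Φ.hasFDerivAt.comp_hasDerivAt t h1)
  have h3 : HasDerivAt (fun s => Φ (NormedSpace.exp (s • lapC G)))
      (Φ (lapC G * NormedSpace.exp (t • lapC G))) t := h2
  convert h3 using 2 <;> rfl


lemma walk_bound (g : V → ℝ) (s : ℝ)
    (hedge : ∀ u v : V, G.toSimpleGraph.Adj u v → g v - g u ≤ s) :
    ∀ {a b : V} (p : G.toSimpleGraph.Walk a b), g b - g a ≤ s * p.length := by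
  intro a b p
  induction p with
  | nil => simp
  | @cons u v w huv p ih =>
    have h1 : g v - g u ≤ s := hedge u v huv
    have h2 : g w - g v ≤ s * p.length := ih
    rw [SimpleGraph.Walk.length_cons]
    push_cast
    linarith

lemma slope_le_of_edge (hconn : G.toSimpleGraph.Connected) (g : V → ℝ) (s : ℝ)
    (hedge : ∀ u v : V, G.toSimpleGraph.Adj u v → g v - g u ≤ s) (x y : V) :
    g y - g x ≤ s * (G.d x y : ℝ) := by
  obtain ⟨p, hp⟩ := hconn.exists_walk_length_eq_dist x y
  have := walk_bound G g s hedge p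
  rw [hp] at this
  exact this

lemma gradNorm_set_finite (g : V → ℝ) :
    {r : ℝ | ∃ x y, G.Adj x y ∧ r = (g x - g y) / (G.d x y : ℝ)}.Finite := by
  apply Set.Finite.subset (Set.finite_range (fun p : V × V => (g p.1 - g p.2) / (G.d p.1 p.2 : ℝ)))
  rintro r ⟨x, y, _, rfl⟩
  exact ⟨(x, y), rfl⟩

lemma edge_le_gradNorm (g : V → ℝ) {x y : V} (hadj : G.toSimpleGraph.Adj x y) :
    g x - g y ≤ G.gradNorm g := by
  have hmem : g x - g y ∈ {r : ℝ | ∃ x y, G.Adj x y ∧ r = (g x - g y) / (G.d x y : ℝ)} := by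
    refine ⟨x, y, hadj, ?_⟩
    rw [d_adj G hadj]
    norm_num
  exact le_csSup (gradNorm_set_finite G g).bddAbove hmem

lemma abs_edge_le_of_gradNorm_le (g : V → ℝ) (c : ℝ) (hg : G.gradNorm g ≤ c)
    {x y : V} (hadj : G.toSimpleGraph.Adj x y) : |g x - g y| ≤ c := by
  rw [abs_le]
  constructor
  · have := (edge_le_gradNorm G g (adj_symm G hadj)).trans hg
    linarith
  · exact (edge_le_gradNorm G g hadj).trans hg

lemma abs_lap_le (g : V → ℝ) (hDeg : ∀ z, G.Deg z ≤ 1) (hedge : ∀ u v : V,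
    G.toSimpleGraph.Adj u v → |g u - g v| ≤ 1) (z : V) : |G.lap g z| ≤ 1 := by
  rw [lap_eq_sum]
  calc |∑ y, G.q z y * (g y - g z)| ≤ ∑ y, |G.q z y * (g y - g z)| :=
        Finset.abs_sum_le_sum_abs _ _
    _ ≤ ∑ y, G.q z y := by
        apply Finset.sum_le_sum
        intro y _
        rw [abs_mul, abs_of_nonneg (q_nonneg G z y)]
        rcases lt_or_ge 0 (G.q z y) with hq | hq
        · have hadj : G.toSimpleGraph.Adj z y := (adj_iff_q_pos G).mpr hq
          have := hedge y z (adj_symm G hadj)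
          calc G.q z y * |g y - g z| ≤ G.q z y * 1 :=
              mul_le_mul_of_nonneg_left this (q_nonneg G z y)
            _ = G.q z y := mul_one _
        · have : G.q z y = 0 := le_antisymm hq (q_nonneg G z y)
          simp [this]
    _ = G.Deg z := (Deg_eq_sum G z).symm
    _ ≤ 1 := hDeg z

lemma kappa_le_elem (hconn : G.toSimpleGraph.Connected) (hDeg : ∀ z, G.Deg z ≤ 1)
    {x y : V} (hxy : x ≠ y) (h : V → ℝ)
    (h1 : (h y - h x) / (G.d y x : ℝ) = 1) (h2 : G.gradNorm h = 1) :
    G.kappa x y ≤ (G.lap h x - G.lap h y) / (G.d x y : ℝ) := by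
  have hd1 : (1:ℝ) ≤ (G.d x y : ℝ) := by
    have := hconn.pos_dist_of_ne hxy
    exact_mod_cast this
  have hdpos : (0:ℝ) < (G.d x y : ℝ) := lt_of_lt_of_le one_pos hd1
  apply csInf_le
  · refine ⟨-2, ?_⟩
    rintro r ⟨g, _, hg2, rfl⟩
    have hedge : ∀ u v : V, G.toSimpleGraph.Adj u v → |g u - g v| ≤ 1 :=
      fun u v hadj => abs_edge_le_of_gradNorm_le G g 1 hg2.le hadj
    have hx := abs_le.mp (abs_lap_le G g hDeg hedge x)
    have hy := abs_le.mp (abs_lap_le G g hDeg hedge y)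
    rw [le_div_iff₀ hdpos]
    nlinarith
  · exact ⟨h, h1, h2, rfl⟩


lemma continuous_finset_sup' {ι : Type*} {s : Finset ι} (hs : s.Nonempty) {g : ι → ℝ → ℝ}
    (hg : ∀ i, Continuous (g i)) : Continuous (fun t => s.sup' hs (fun i => g i t)) := by
  induction hs using Finset.Nonempty.cons_induction with
  | singleton i =>
    have : (fun t => ({i} : Finset ι).sup' (Finset.singleton_nonempty i) (fun j => g j t))
        = g i := by
      funext t; simp
    rw [this]; exact hg i
  | cons i s hi hs ih =>
    have : (fun t => (Finset.cons i s hi).sup' (Finset.cons_nonempty hi) (fun j => g j t))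
        = fun t => (g i t) ⊔ (s.sup' hs (fun j => g j t)) := by
      funext t
      exact Finset.sup'_cons (f := fun j => g j t) (α := ℝ) hs
    rw [this]; exact (hg i).sup ih

variable (V) in
noncomputable def pairs : Finset (V × V) := Finset.univ.filter (fun p => p.1 ≠ p.2)

lemma mem_pairs {p : V × V} : p ∈ pairs V ↔ p.1 ≠ p.2 := by simp [pairs]

lemma pairs_nonempty [Nontrivial V] : (pairs V).Nonempty := by
  obtain ⟨x, y, hxy⟩ := exists_pair_ne V
  exact ⟨(x, y), mem_pairs.mpr hxy⟩

/-- normalized difference over a pair -/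
noncomputable def slp (g : V → ℝ) (p : V × V) : ℝ := (g p.2 - g p.1) / (G.d p.1 p.2 : ℝ)

variable [Nontrivial V]

/-- maximal slope over all distinct pairs -/
noncomputable def maxSlope (g : V → ℝ) : ℝ := (pairs V).sup' pairs_nonempty (slp G g)

lemma d_comm (x y : V) : G.d x y = G.d y x := by
  unfold WeightedGraph.d; rw [SimpleGraph.dist_comm]

lemma slp_swap (g : V → ℝ) (x y : V) : slp G g (y, x) = - slp G g (x, y) := by
  unfold slp
  simp only
  rw [d_comm G y x]
  ring

lemma maxSlope_nonneg (g : V → ℝ) : 0 ≤ maxSlope G g := by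
  obtain ⟨p, hp⟩ := pairs_nonempty (V := V)
  have h1 : slp G g p ≤ maxSlope G g := Finset.le_sup' _ hp
  have hp' : (p.2, p.1) ∈ pairs V := mem_pairs.mpr (Ne.symm (mem_pairs.mp hp))
  have h2 : slp G g (p.2, p.1) ≤ maxSlope G g := Finset.le_sup' _ hp'
  rw [show ((p.2, p.1) : V × V) = (p.2, p.1) from rfl, slp_swap] at h2
  have : slp G g (p.1, p.2) = slp G g p := by cases p; rfl
  rw [this] at h2
  linarith

lemma diff_le_maxSlope (hconn : G.toSimpleGraph.Connected) (g : V → ℝ) (x y : V) :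
    g y - g x ≤ maxSlope G g * (G.d x y : ℝ) := by
  rcases eq_or_ne x y with rfl | hxy
  · simp [WeightedGraph.d, SimpleGraph.dist_self]
  · have hdpos : (0:ℝ) < (G.d x y : ℝ) := by exact_mod_cast hconn.pos_dist_of_ne hxy
    have h1 : slp G g (x, y) ≤ maxSlope G g := Finset.le_sup' _ (mem_pairs.mpr hxy)
    have := mul_le_mul_of_nonneg_right h1 hdpos.le
    rw [slp, div_mul_cancel₀] at this
    · exact this
    · exact hdpos.ne'

lemma edge_diff_le (hconn : G.toSimpleGraph.Connected) (g : V → ℝ) {x y : V}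
    (hadj : G.toSimpleGraph.Adj x y) : g y - g x ≤ maxSlope G g := by
  have := diff_le_maxSlope G hconn g x y
  rw [d_adj G hadj] at this
  simpa using this

/-- there is an edge attaining the maximal slope (when positive) -/
lemma exists_attaining_edge (hconn : G.toSimpleGraph.Connected) (g : V → ℝ) :
    ∃ a b : V, G.toSimpleGraph.Adj a b ∧ g b - g a = maxSlope G g := by
  have hE : ∃ e : V × V, G.toSimpleGraph.Adj e.1 e.2 := by
    obtain ⟨x0, y0, hne⟩ := exists_pair_ne V
    have hd := hconn.pos_dist_of_ne hne
    obtain ⟨pw, hpw⟩ := hconn.exists_walk_length_eq_dist x0 y0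
    cases pw with
    | nil => rw [← hpw] at hd; simp at hd
    | cons hadj _ => exact ⟨(_, _), hadj⟩
  classical
  set E : Finset (V × V) := Finset.univ.filter (fun p : V × V => G.toSimpleGraph.Adj p.1 p.2)
    with hE'
  obtain ⟨e0, he0⟩ := hE
  have hEne : E.Nonempty := ⟨e0, by simp [hE', he0]⟩
  set s' := E.sup' hEne (fun p => g p.2 - g p.1) with hs'
  have hs'le : s' ≤ maxSlope G g := by
    apply Finset.sup'_le
    intro p hp
    have hadj : G.toSimpleGraph.Adj p.1 p.2 := by simpa [hE'] using hp
    exact edge_diff_le G hconn g hadj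
  have hles' : maxSlope G g ≤ s' := by
    apply Finset.sup'_le
    intro p hp
    have hxy : p.1 ≠ p.2 := mem_pairs.mp hp
    have hdpos : (0:ℝ) < (G.d p.1 p.2 : ℝ) := by exact_mod_cast hconn.pos_dist_of_ne hxy
    rw [slp, div_le_iff₀ hdpos]
    have hedge : ∀ u v : V, G.toSimpleGraph.Adj u v → g v - g u ≤ s' := by
      intro u v huv
      exact Finset.le_sup' (fun p : V × V => g p.2 - g p.1) (by simp [hE', huv] :
        ((u, v) : V × V) ∈ E)
    exact slope_le_of_edge G hconn g s' hedge p.1 p.2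
  have hseq : s' = maxSlope G g := le_antisymm hs'le hles'
  obtain ⟨e, heE, hesup⟩ := Finset.exists_mem_eq_sup' hEne (fun p : V × V => g p.2 - g p.1)
  refine ⟨e.1, e.2, by simpa [hE'] using heE, ?_⟩
  rw [← hseq, hs', hesup]



/-- curvature bound at a maximizing pair -/
lemma key_deriv_bound (hconn : G.toSimpleGraph.Connected) (hDeg : ∀ z, G.Deg z ≤ 1)
    {K : ℝ} (hK : 0 < K) (hκ : ∀ x y : V, x ≠ y → K ≤ G.kappa x y)
    (g : V → ℝ) {p : V × V} (hp : p ∈ pairs V) (hmax : slp G g p = maxSlope G g) :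
    (lapC G g p.2 - lapC G g p.1) / (G.d p.1 p.2 : ℝ) ≤ -(K * maxSlope G g) := by
  obtain ⟨x, y⟩ := p
  have hxy : x ≠ y := mem_pairs.mp hp
  have hdpos : (0:ℝ) < (G.d x y : ℝ) := by exact_mod_cast hconn.pos_dist_of_ne hxy
  set ψ := maxSlope G g with hψ
  have hψ0 : 0 ≤ ψ := maxSlope_nonneg G g
  rcases eq_or_lt_of_le hψ0 with hzero | hpos
  · -- maxSlope = 0 : g is constant, Laplacian vanishes
    have hconst : ∀ a b : V, g b - g a = 0 := by
      intro a b
      rcases eq_or_ne a b with rfl | hab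
      · ring
      · have h1 : g b - g a ≤ ψ * (G.d a b : ℝ) := diff_le_maxSlope G hconn g a b
        have h2 : g a - g b ≤ ψ * (G.d b a : ℝ) := diff_le_maxSlope G hconn g b a
        rw [← hzero] at h1 h2
        simp only [zero_mul] at h1 h2
        linarith
    have hlapz : ∀ z, lapC G g z = 0 := by
      intro z
      rw [lapC_apply]
      apply Finset.sum_eq_zero
      intro w _
      rw [hconst z w, mul_zero]
    rw [hlapz, hlapz, ← hzero]
    simp
  · -- positive maximal slope: apply the curvature hypothesis
    set h : V → ℝ := fun z => g z / ψ with hh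
    have hslp : (g y - g x) / (G.d x y : ℝ) = ψ := hmax
    have h1 : (h y - h x) / (G.d y x : ℝ) = 1 := by
      rw [← d_comm]
      have e : h y - h x = (g y - g x) / ψ := by rw [hh]; ring
      rw [e, div_right_comm, hslp, div_self hpos.ne']
    have h2 : G.gradNorm h = 1 := by
      obtain ⟨a, b, hab, habs⟩ := exists_attaining_edge G hconn g
      rw [WeightedGraph.gradNorm]
      apply le_antisymm
      · apply Real.sSup_le _ zero_le_one
        rintro rr ⟨c, e, hce, rfl⟩
        rw [d_adj G hce]
        have hdiff : g c - g e ≤ ψ := edge_diff_le G hconn g (adj_symm G hce)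
        have : h c - h e = (g c - g e) / ψ := by rw [hh]; ring
        rw [this]
        push_cast
        rw [div_one, div_le_one hpos]
        exact hdiff
      · apply le_csSup (gradNorm_set_finite G h).bddAbove
        refine ⟨b, a, adj_symm G hab, ?_⟩
        rw [d_adj G (adj_symm G hab)]
        have : h b - h a = (g b - g a) / ψ := by rw [hh]; ring
        push_cast
        rw [div_one, this, habs, div_self hpos.ne']
    have hk := (hκ x y hxy).trans (kappa_le_elem G hconn hDeg hxy h h1 h2)
    have hlaph : ∀ z, G.lap h z = G.lap g z / ψ := by
      intro z
      rw [lap_eq_sum, lap_eq_sum, Finset.sum_div]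
      apply Finset.sum_congr rfl
      intro w _
      rw [hh]
      ring
    rw [hlaph, hlaph] at hk
    -- hk : K ≤ ((lap g x)/ψ - (lap g y)/ψ) / d
    have e2 : (G.lap g x / ψ - G.lap g y / ψ) / (G.d x y : ℝ)
        = ((G.lap g x - G.lap g y) / (G.d x y : ℝ)) / ψ := by ring
    rw [e2] at hk
    have := mul_le_mul_of_nonneg_left hk hψ0
    rw [mul_div_cancel₀ _ hpos.ne'] at this
    -- this : ψ * K ≤ (lap g x - lap g y) / d
    have hlc : ∀ z, G.lap g z = lapC G g z := fun z => lap_eq_lapC G g z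
    rw [hlc, hlc] at this
    have : (lapC G g y - lapC G g x) / (G.d x y : ℝ) ≤ -(ψ * K) := by
      have e3 : (lapC G g y - lapC G g x) / (G.d x y : ℝ)
          = -((lapC G g x - lapC G g y) / (G.d x y : ℝ)) := by ring
      rw [e3]
      linarith
    calc (lapC G g y - lapC G g x) / (G.d x y : ℝ) ≤ -(ψ * K) := this
      _ = -(K * ψ) := by ring

open Filter Topology in
lemma grad_decay (hconn : G.toSimpleGraph.Connected) (hDeg : ∀ z, G.Deg z ≤ 1)
    {K : ℝ} (hK : 0 < K) (hκ : ∀ x y : V, x ≠ y → K ≤ G.kappa x y)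
    (f : V → ℝ) {t : ℝ} (ht : 0 ≤ t) :
    maxSlope G (heat G t f) ≤ maxSlope G f * Real.exp (-(K * t)) := by
  set u : ℝ → V → ℝ := fun s => heat G s f with hu
  set φ : V × V → ℝ → ℝ := fun p s => slp G (u s) p * Real.exp (K * s) with hφ
  have hder : ∀ (p : V × V) (s : ℝ), HasDerivAt (fun z => slp G (u z) p)
      ((lapC G (u s) p.2 - lapC G (u s) p.1) / (G.d p.1 p.2 : ℝ)) s := by
    intro p s
    exact ((heat_hasDerivAt G f p.2 s).sub (heat_hasDerivAt G f p.1 s)).div_const _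
  have hexp : ∀ s : ℝ, HasDerivAt (fun z : ℝ => Real.exp (K * z)) (Real.exp (K * s) * K) s := by
    intro s
    simpa using ((hasDerivAt_id s).const_mul K).exp
  have hφder : ∀ p s, HasDerivAt (φ p)
      ((lapC G (u s) p.2 - lapC G (u s) p.1) / (G.d p.1 p.2 : ℝ) * Real.exp (K * s)
        + slp G (u s) p * (Real.exp (K * s) * K)) s :=
    fun p s => (hder p s).mul (hexp s)
  have hφcont : ∀ p : V × V, Continuous (φ p) := by
    intro p
    have : Differentiable ℝ (φ p) := fun s => (hφder p s).differentiableAt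
    exact this.continuous
  set Φ : ℝ → ℝ := fun s => (pairs V).sup' pairs_nonempty (fun p => φ p s) with hΦ
  have hΦeq : ∀ s, Φ s = maxSlope G (u s) * Real.exp (K * s) := by
    intro s
    have hsup : ∀ a b : ℝ, (a ⊔ b) * Real.exp (K * s)
        = (a * Real.exp (K * s)) ⊔ (b * Real.exp (K * s)) := by
      intro a b
      rw [max_mul_of_nonneg _ _ (Real.exp_nonneg _)]
    calc Φ s = (pairs V).sup' pairs_nonempty
          ((fun z : ℝ => z * Real.exp (K * s)) ∘ (slp G (u s))) := rfl
      _ = maxSlope G (u s) * Real.exp (K * s) :=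
          (Finset.comp_sup'_eq_sup'_comp pairs_nonempty _ hsup).symm
  have gron : ∀ s ∈ Set.Icc (0:ℝ) t, Φ s ≤ Φ 0 := by
    intro s hs
    have hcont : ContinuousOn Φ (Set.Icc 0 t) :=
      (continuous_finset_sup' pairs_nonempty hφcont).continuousOn
    have hf' : ∀ τ ∈ Set.Ico (0:ℝ) t, ∀ r, (fun _ => (0:ℝ)) τ < r →
        ∃ᶠ z in nhdsWithin τ (Set.Ioi τ), (z - τ)⁻¹ * (Φ z - Φ τ) < r := by
      intro τ _ r hr
      have hev : ∀ p ∈ pairs V, ∀ᶠ z in nhdsWithin τ (Set.Ioi τ),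
          φ p z < Φ τ + r * (z - τ) := by
        intro p hp
        rcases lt_or_eq_of_le (Finset.le_sup' (fun q => φ q τ) hp : φ p τ ≤ Φ τ) with hlt | heq
        · have hlt' : φ p τ < Φ τ := hlt
          have h1 : Tendsto (fun z => φ p z) (nhdsWithin τ (Set.Ioi τ)) (𝓝 (φ p τ)) :=
            ((hφcont p).tendsto τ).mono_left nhdsWithin_le_nhds
          have h2 : Tendsto (fun z => Φ τ + r * (z - τ)) (nhdsWithin τ (Set.Ioi τ))
              (𝓝 (Φ τ + r * (τ - τ))) := by
            apply Tendsto.mono_left _ nhdsWithin_le_nhds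
            exact (continuous_const.add (continuous_const.mul
              (continuous_id.sub continuous_const))).tendsto τ
          have h3 : φ p τ < Φ τ + r * (τ - τ) := by
            have : r * (τ - τ) = 0 := by ring
            rw [this, add_zero]
            exact hlt'
          exact h1.eventually_lt h2 h3
        · -- active pair: use the curvature bound
          have heq' : φ p τ = Φ τ := heq
          have hsl : slp G (u τ) p = maxSlope G (u τ) := by
            have h5 : slp G (u τ) p * Real.exp (K * τ)
                = maxSlope G (u τ) * Real.exp (K * τ) := by
              rw [← hΦeq τ]
              exact heq'
            exact mul_right_cancel₀ (Real.exp_ne_zero _) h5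
          have hD := key_deriv_bound G hconn hDeg hK hκ (u τ) hp hsl
          have hDer := hφder p τ
          have hDle : (lapC G (u τ) p.2 - lapC G (u τ) p.1) / (G.d p.1 p.2 : ℝ)
              * Real.exp (K * τ) + slp G (u τ) p * (Real.exp (K * τ) * K) ≤ 0 := by
            have hepos := Real.exp_pos (K * τ)
            rw [hsl]
            nlinarith [hD, hepos, maxSlope_nonneg G (u τ)]
          have hslope := hasDerivAt_iff_tendsto_slope.mp hDer
          have hev1 : ∀ᶠ z in nhdsWithin τ {τ}ᶜ, slope (φ p) τ z < r :=
            hslope.eventually_lt tendsto_const_nhds (lt_of_le_of_lt hDle hr)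
          have hev2 : ∀ᶠ z in nhdsWithin τ (Set.Ioi τ), slope (φ p) τ z < r :=
            hev1.filter_mono (nhdsWithin_mono τ (fun z hz => ne_of_gt hz))
          filter_upwards [hev2, self_mem_nhdsWithin] with z hz hzmem
          have hzpos : (0:ℝ) < z - τ := sub_pos.mpr hzmem
          rw [slope_def_field] at hz
          
          have h6 := (div_lt_iff₀ hzpos).mp hz
          have h7 : φ p τ = Φ τ := heq
          show φ p z < Φ τ + r * (z - τ)
          linarith
      have hall := (Finset.eventually_all (pairs V)).mpr hev
      apply Filter.Eventually.frequently
      filter_upwards [hall, self_mem_nhdsWithin] with z hz hzmem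
      have hzpos : (0:ℝ) < z - τ := sub_pos.mpr hzmem
      have hΦz : Φ z < Φ τ + r * (z - τ) := by
        apply (Finset.sup'_lt_iff pairs_nonempty).mpr
        intro p hp
        exact hz p hp
      rw [inv_mul_eq_div, div_lt_iff₀ hzpos]
      nlinarith
    have hbound : ∀ τ ∈ Set.Ico (0:ℝ) t, (fun _ => (0:ℝ)) τ ≤ 0 * Φ τ + 0 := by
      intro τ _; simp
    have := le_gronwallBound_of_liminf_deriv_right_le (f := Φ) (f' := fun _ => (0:ℝ))
      (δ := Φ 0) (K := 0) (ε := 0) (a := 0) (b := t) hcont hf' le_rfl hbound s hs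
    simpa [gronwallBound_K0] using this
  have hfin := gron t ⟨ht, le_refl t⟩
  rw [hΦeq t, hΦeq 0] at hfin
  have hu0 : u 0 = f := heat_zero G f
  rw [hu0] at hfin
  simp only [mul_zero, Real.exp_zero, mul_one] at hfin
  calc maxSlope G (u t) = (maxSlope G (u t) * Real.exp (K * t)) * Real.exp (-(K * t)) := by
        rw [mul_assoc, ← Real.exp_add]
        simp
    _ ≤ maxSlope G f * Real.exp (-(K * t)) :=
        mul_le_mul_of_nonneg_right hfin (Real.exp_nonneg _)


omit [Nontrivial V] in
lemma double_swap (F : V → V → ℝ) :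
    ∑ x, ∑ y, G.w x y * F x y = ∑ x, ∑ y, G.w x y * F y x := by
  rw [Finset.sum_comm]
  apply Finset.sum_congr rfl
  intro x _
  apply Finset.sum_congr rfl
  intro y _
  rw [G.w_symm]

omit [Nontrivial V] in
lemma m_lap_expand (g h : V → ℝ) :
    ∑ x, G.m x * (lapC G g x * h x) = ∑ x, ∑ y, G.w x y * ((g y - g x) * h x) := by
  apply Finset.sum_congr rfl
  intro x _
  rw [lapC_apply, Finset.sum_mul, Finset.mul_sum]
  apply Finset.sum_congr rfl
  intro y _
  rw [← m_mul_q G x y]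
  ring

omit [Nontrivial V] in
lemma sum_m_lap (g : V → ℝ) : ∑ x, G.m x * lapC G g x = 0 := by
  have h0 : ∑ x, G.m x * lapC G g x = ∑ x, G.m x * (lapC G g x * 1) := by
    apply Finset.sum_congr rfl; intro x _; ring
  rw [h0, m_lap_expand]
  have h1 := double_swap G (fun x y => (g y - g x) * 1)
  have h2 : ∑ x, ∑ y, G.w x y * ((g x - g y) * 1)
      = - ∑ x, ∑ y, G.w x y * ((g y - g x) * 1) := by
    rw [← Finset.sum_neg_distrib]
    apply Finset.sum_congr rfl
    intro x _
    rw [← Finset.sum_neg_distrib]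
    apply Finset.sum_congr rfl
    intro y _
    ring
  rw [h2] at h1
  linarith

omit [Nontrivial V] in
lemma dirichlet_bound (hDeg : ∀ z, G.Deg z ≤ 1) (l L : ℝ) (hl : 0 ≤ l) (hL0 : 0 ≤ L)
    (g : V → ℝ) (hedge : ∀ x y : V, G.toSimpleGraph.Adj x y → |g y - g x| ≤ L) :
    -(l / 2 * L ^ 2) * (∑ x, G.m x * Real.exp (l * g x))
      ≤ ∑ x, G.m x * (lapC G g x * Real.exp (l * g x)) := by
  have hS := m_lap_expand G g (fun x => Real.exp (l * g x))
  have hswap := double_swap G (fun x y => (g y - g x) * Real.exp (l * g x))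
  -- 2S = ∑∑ w (g y - g x)(e^{lgx} - e^{lgy})
  have h2S : 2 * (∑ x, ∑ y, G.w x y * ((g y - g x) * Real.exp (l * g x)))
      = ∑ x, ∑ y, G.w x y * ((g y - g x) * (Real.exp (l * g x) - Real.exp (l * g y))) := by
    rw [two_mul]
    nth_rewrite 2 [hswap]
    rw [← Finset.sum_add_distrib]
    apply Finset.sum_congr rfl
    intro x _
    rw [← Finset.sum_add_distrib]
    apply Finset.sum_congr rfl
    intro y _
    ring
  have hterm : ∀ x y : V,
      -(G.w x y * (l / 2 * L ^ 2 * (Real.exp (l * g x) + Real.exp (l * g y))))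
        ≤ G.w x y * ((g y - g x) * (Real.exp (l * g x) - Real.exp (l * g y))) := by
    intro x y
    rcases eq_or_lt_of_le (G.w_nonneg x y) with hw | hw
    · rw [← hw]; simp
    · have hadj : G.toSimpleGraph.Adj x y := hw
      have hd := diff_mul_exp_diff_le l L (g x) (g y) hl (hedge x y hadj)
      have key : -(l / 2 * L ^ 2 * (Real.exp (l * g x) + Real.exp (l * g y)))
          ≤ (g y - g x) * (Real.exp (l * g x) - Real.exp (l * g y)) := by nlinarith
      calc -(G.w x y * (l / 2 * L ^ 2 * (Real.exp (l * g x) + Real.exp (l * g y))))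
          = G.w x y * (-(l / 2 * L ^ 2 * (Real.exp (l * g x) + Real.exp (l * g y)))) := by ring
        _ ≤ G.w x y * ((g y - g x) * (Real.exp (l * g x) - Real.exp (l * g y))) :=
            mul_le_mul_of_nonneg_left key hw.le
  -- row sums of w are at most m
  have hrow : ∀ x, ∑ y, G.w x y ≤ G.m x := by
    intro x
    have : ∑ y, G.w x y = G.m x * G.Deg x := by
      rw [Deg_eq_sum, Finset.mul_sum]
      exact Finset.sum_congr rfl fun y _ => (m_mul_q G x y).symm
    rw [this]
    calc G.m x * G.Deg x ≤ G.m x * 1 := mul_le_mul_of_nonneg_left (hDeg x) (G.m_pos x).le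
      _ = G.m x := mul_one _
  have hA : ∑ x, ∑ y, G.w x y * Real.exp (l * g x) ≤ ∑ x, G.m x * Real.exp (l * g x) := by
    apply Finset.sum_le_sum
    intro x _
    rw [← Finset.sum_mul]
    exact mul_le_mul_of_nonneg_right (hrow x) (Real.exp_nonneg _)
  have hB : ∑ x, ∑ y, G.w x y * Real.exp (l * g y) ≤ ∑ x, G.m x * Real.exp (l * g x) := by
    have := double_swap G (fun x y => Real.exp (l * g y))
    calc ∑ x, ∑ y, G.w x y * Real.exp (l * g y)
        = ∑ x, ∑ y, G.w x y * Real.exp (l * g x) := this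
      _ ≤ ∑ x, G.m x * Real.exp (l * g x) := hA
  have hsum : -(l / 2 * L ^ 2) * ((∑ x, ∑ y, G.w x y * Real.exp (l * g x))
        + ∑ x, ∑ y, G.w x y * Real.exp (l * g y))
      ≤ 2 * (∑ x, ∑ y, G.w x y * ((g y - g x) * Real.exp (l * g x))) := by
    rw [h2S]
    calc -(l / 2 * L ^ 2) * ((∑ x, ∑ y, G.w x y * Real.exp (l * g x))
          + ∑ x, ∑ y, G.w x y * Real.exp (l * g y))
        = ∑ x, ∑ y, -(G.w x y * (l / 2 * L ^ 2
            * (Real.exp (l * g x) + Real.exp (l * g y)))) := by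
          rw [← Finset.sum_add_distrib]
          rw [Finset.mul_sum]
          apply Finset.sum_congr rfl
          intro x _
          rw [← Finset.sum_add_distrib, Finset.mul_sum]
          apply Finset.sum_congr rfl
          intro y _
          ring
      _ ≤ ∑ x, ∑ y, G.w x y * ((g y - g x) * (Real.exp (l * g x) - Real.exp (l * g y))) := by
          apply Finset.sum_le_sum
          intro x _
          apply Finset.sum_le_sum
          intro y _
          exact hterm x y
  -- combine
  have hwpos : 0 ≤ l / 2 * L ^ 2 := mul_nonneg (by linarith) (sq_nonneg L)
  have hF0 : 0 ≤ ∑ x, G.m x * Real.exp (l * g x) := by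
    apply Finset.sum_nonneg
    intro x _
    exact mul_nonneg (G.m_pos x).le (Real.exp_nonneg _)
  rw [hS]
  nlinarith [hsum, hA, hB, mul_le_mul_of_nonneg_left (add_le_add hA hB) hwpos]


open Filter Topology in
lemma exp_moment_bound (hconn : G.toSimpleGraph.Connected) (hm : ∑ x : V, G.m x = 1)
    (hDeg : ∀ z, G.Deg z ≤ 1) {K : ℝ} (hK : 0 < K)
    (hκ : ∀ x y : V, x ≠ y → K ≤ G.kappa x y)
    (f : V → ℝ) (hmean : ∑ x : V, G.m x * f x = 0) (hgrad : G.gradNorm f ≤ 1)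
    (l : ℝ) (hl : 0 ≤ l) :
    ∑ x : V, G.m x * Real.exp (l * f x) ≤ Real.exp (l * l / (4 * K)) := by
  set u : ℝ → V → ℝ := fun s => heat G s f with hu
  have hu0 : ∀ x, u 0 x = f x := fun x => by show heat G 0 f x = f x; rw [heat_zero]
  have hms1 : maxSlope G f ≤ 1 := by
    apply Finset.sup'_le
    intro p hp
    have hxy := mem_pairs.mp hp
    have hdpos : (0:ℝ) < (G.d p.1 p.2 : ℝ) := by exact_mod_cast hconn.pos_dist_of_ne hxy
    rw [slp, div_le_one hdpos]
    have hedge : ∀ a b : V, G.toSimpleGraph.Adj a b → f b - f a ≤ 1 := by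
      intro a b hab
      exact (edge_le_gradNorm G f (adj_symm G hab)).trans hgrad
    have h := slope_le_of_edge G hconn f 1 hedge p.1 p.2
    linarith
  have hgd : ∀ s : ℝ, 0 ≤ s → maxSlope G (u s) ≤ Real.exp (-(K * s)) := by
    intro s hs
    calc maxSlope G (u s) ≤ maxSlope G f * Real.exp (-(K * s)) :=
          grad_decay G hconn hDeg hK hκ f hs
      _ ≤ 1 * Real.exp (-(K * s)) := mul_le_mul_of_nonneg_right hms1 (Real.exp_nonneg _)
      _ = Real.exp (-(K * s)) := one_mul _
  set F : ℝ → ℝ := fun s => ∑ x, G.m x * Real.exp (l * u s x) with hF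
  have hFpos : ∀ s, 0 < F s := by
    intro s
    apply Finset.sum_pos
    · intro x _; exact mul_pos (G.m_pos x) (Real.exp_pos _)
    · exact Finset.univ_nonempty
  set F' : ℝ → ℝ := fun s => ∑ x, G.m x * (Real.exp (l * u s x) * (l * lapC G (u s) x))
    with hF'
  have hFder : ∀ s, HasDerivAt F (F' s) s := by
    intro s
    apply HasDerivAt.fun_sum
    intro x _
    exact (((heat_hasDerivAt G f x s).const_mul l).exp).const_mul (G.m x)
  have hFlow : ∀ s : ℝ, 0 ≤ s → -(l * l / 2 * Real.exp (-(2 * K * s))) * F s ≤ F' s := by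
    intro s hs
    set L := maxSlope G (u s) with hL
    have hL0 : 0 ≤ L := maxSlope_nonneg G (u s)
    have hedge : ∀ x y : V, G.toSimpleGraph.Adj x y → |u s y - u s x| ≤ L := by
      intro x y hxy
      rw [abs_le]
      constructor
      · linarith [edge_diff_le G hconn (u s) (adj_symm G hxy)]
      · exact edge_diff_le G hconn (u s) hxy
    have hdir := dirichlet_bound G hDeg l L hl hL0 (u s) hedge
    have hF'eq : F' s = l * ∑ x, G.m x * (lapC G (u s) x * Real.exp (l * u s x)) := by
      rw [hF', Finset.mul_sum]
      apply Finset.sum_congr rfl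
      intro x _
      ring
    have hLe : L ^ 2 ≤ Real.exp (-(2 * K * s)) := by
      have h1 : L ≤ Real.exp (-(K * s)) := hgd s hs
      have h2 := mul_le_mul h1 h1 hL0 (Real.exp_nonneg _)
      calc L ^ 2 = L * L := sq L
        _ ≤ Real.exp (-(K * s)) * Real.exp (-(K * s)) := h2
        _ = Real.exp (-(2 * K * s)) := by rw [← Real.exp_add]; ring_nf
    have hFs : (0:ℝ) < F s := hFpos s
    have hFsum : (∑ x, G.m x * Real.exp (l * u s x)) = F s := rfl
    rw [hFsum] at hdir
    calc -(l * l / 2 * Real.exp (-(2 * K * s))) * F s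
        ≤ -(l * l / 2 * L ^ 2) * F s := by
          have hll : 0 ≤ l * l / 2 := by positivity
          nlinarith [mul_le_mul_of_nonneg_right (mul_le_mul_of_nonneg_left hLe hll) hFs.le]
      _ = l * (-(l / 2 * L ^ 2) * F s) := by ring
      _ ≤ l * (∑ x, G.m x * (lapC G (u s) x * Real.exp (l * u s x))) :=
          mul_le_mul_of_nonneg_left hdir hl
      _ = F' s := hF'eq.symm
  have hMean : ∀ s : ℝ, ∑ x, G.m x * u s x = 0 := by
    set M : ℝ → ℝ := fun s => ∑ x, G.m x * u s x with hM
    have hMder : ∀ s, HasDerivAt M (∑ x, G.m x * lapC G (u s) x) s := by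
      intro s
      apply HasDerivAt.fun_sum
      intro x _
      exact (heat_hasDerivAt G f x s).const_mul (G.m x)
    have hconst : ∀ s t' : ℝ, M s = M t' := by
      apply is_const_of_deriv_eq_zero
      · intro s; exact (hMder s).differentiableAt
      · intro s
        rw [(hMder s).deriv, sum_m_lap]
    intro s
    have h0 : M 0 = 0 := by
      calc M 0 = ∑ x, G.m x * f x := by
            apply Finset.sum_congr rfl; intro x _; rw [hu0]
        _ = 0 := hmean
    calc ∑ x, G.m x * u s x = M s := rfl
      _ = M 0 := hconst s 0
      _ = 0 := h0
  set D : ℝ := (pairs V).sup' pairs_nonempty (fun p => (G.d p.1 p.2 : ℝ)) with hD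
  have hD0 : 0 ≤ D := by
    obtain ⟨p, hp⟩ := pairs_nonempty (V := V)
    exact (Nat.cast_nonneg _).trans (Finset.le_sup' (fun p : V × V => (G.d p.1 p.2 : ℝ)) hp)
  have hdD : ∀ x y : V, (G.d x y : ℝ) ≤ D := by
    intro x y
    rcases eq_or_ne x y with rfl | hne
    · have : G.d x x = 0 := by
        unfold WeightedGraph.d; exact SimpleGraph.dist_self
      rw [this]
      simpa using hD0
    · exact Finset.le_sup' (fun p : V × V => (G.d p.1 p.2 : ℝ))
        (show ((x, y) : V × V) ∈ pairs V from mem_pairs.mpr hne)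
  have hpt : ∀ s : ℝ, 0 ≤ s → ∀ x, u s x ≤ Real.exp (-(K * s)) * D := by
    intro s hs x
    have h1 : u s x = ∑ y, G.m y * (u s x - u s y) := by
      calc u s x = u s x * (∑ y, G.m y) - ∑ y, G.m y * u s y := by rw [hm, hMean s]; ring
        _ = (∑ y, u s x * G.m y) - ∑ y, G.m y * u s y := by rw [Finset.mul_sum]
        _ = ∑ y, G.m y * (u s x - u s y) := by
            rw [← Finset.sum_sub_distrib]
            apply Finset.sum_congr rfl
            intro y _
            ring
    rw [h1]
    have h2 : ∀ y : V, G.m y * (u s x - u s y) ≤ G.m y * (Real.exp (-(K * s)) * D) := by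
      intro y
      apply mul_le_mul_of_nonneg_left _ (G.m_pos y).le
      calc u s x - u s y ≤ maxSlope G (u s) * (G.d y x : ℝ) :=
            diff_le_maxSlope G hconn (u s) y x
        _ ≤ Real.exp (-(K * s)) * D :=
            mul_le_mul (hgd s hs) (hdD y x) (Nat.cast_nonneg _) (Real.exp_nonneg _)
    calc ∑ y, G.m y * (u s x - u s y) ≤ ∑ y, G.m y * (Real.exp (-(K * s)) * D) :=
          Finset.sum_le_sum (fun y _ => h2 y)
      _ = (∑ y, G.m y) * (Real.exp (-(K * s)) * D) := by rw [← Finset.sum_mul]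
      _ = Real.exp (-(K * s)) * D := by rw [hm, one_mul]
  have hFT : ∀ s : ℝ, 0 ≤ s → F s ≤ Real.exp (l * (Real.exp (-(K * s)) * D)) := by
    intro s hs
    calc F s ≤ ∑ x, G.m x * Real.exp (l * (Real.exp (-(K * s)) * D)) := by
          apply Finset.sum_le_sum
          intro x _
          apply mul_le_mul_of_nonneg_left _ (G.m_pos x).le
          exact Real.exp_le_exp.mpr (mul_le_mul_of_nonneg_left (hpt s hs x) hl)
      _ = (∑ x, G.m x) * Real.exp (l * (Real.exp (-(K * s)) * D)) := by rw [← Finset.sum_mul]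
      _ = Real.exp (l * (Real.exp (-(K * s)) * D)) := by rw [hm, one_mul]
  set Ψ : ℝ → ℝ := fun s => Real.log (F s) - l * l / (4 * K) * Real.exp (-(2 * K * s)) with hΨ
  have hΨder : ∀ s, HasDerivAt Ψ (F' s / F s + l * l / 2 * Real.exp (-(2 * K * s))) s := by
    intro s
    have h1 : HasDerivAt (fun z => Real.log (F z)) (F' s / F s) s :=
      (hFder s).log (hFpos s).ne'
    have h2 : HasDerivAt (fun z : ℝ => Real.exp (-(2 * K * z)))
        (Real.exp (-(2 * K * s)) * (-(2 * K))) s := by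
      have h3 : HasDerivAt (fun z : ℝ => -(2 * K) * z) (-(2 * K)) s := by
        simpa using (hasDerivAt_id s).const_mul (-(2 * K))
      have h4 := h3.exp
      convert h4 using 2 <;> ring
    have h5 := h1.sub (h2.const_mul (l * l / (4 * K)))
    refine h5.congr_deriv ?_
    have hK0 : K ≠ 0 := hK.ne'
    field_simp
    ring
  have hmono : MonotoneOn Ψ (Set.Ici (0:ℝ)) := by
    apply monotoneOn_of_deriv_nonneg (convex_Ici 0)
    · have : Differentiable ℝ Ψ := fun s => (hΨder s).differentiableAt
      exact this.continuous.continuousOn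
    · intro s _; exact (hΨder s).differentiableAt.differentiableWithinAt
    · intro s hs
      have hs0 : 0 ≤ s := le_of_lt (by simpa [interior_Ici] using hs)
      rw [(hΨder s).deriv]
      have hFs := hFpos s
      have h6 : -(l * l / 2 * Real.exp (-(2 * K * s))) ≤ F' s / F s := by
        rw [le_div_iff₀ hFs]
        linarith [hFlow s hs0]
      linarith
  have hlog : ∀ T : ℝ, 0 ≤ T →
      Real.log (F 0) ≤ l * (Real.exp (-(K * T)) * D) + l * l / (4 * K) := by
    intro T hT
    have h1 := hmono Set.self_mem_Ici (Set.mem_Ici.mpr hT) hT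
    have h2 : Real.log (F T) ≤ l * (Real.exp (-(K * T)) * D) := by
      calc Real.log (F T) ≤ Real.log (Real.exp (l * (Real.exp (-(K * T)) * D))) :=
            Real.log_le_log (hFpos T) (hFT T hT)
        _ = l * (Real.exp (-(K * T)) * D) := Real.log_exp _
    have hΨ0 : Ψ 0 = Real.log (F 0) - l * l / (4 * K) := by
      rw [hΨ]; simp
    have hΨT : Ψ T = Real.log (F T) - l * l / (4 * K) * Real.exp (-(2 * K * T)) := rfl
    have hterm : 0 ≤ l * l / (4 * K) * Real.exp (-(2 * K * T)) := by positivity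
    rw [hΨ0, hΨT] at h1
    linarith
  have hlim : Tendsto (fun T : ℝ => l * (Real.exp (-(K * T)) * D) + l * l / (4 * K))
      atTop (𝓝 (l * (0 * D) + l * l / (4 * K))) := by
    apply Tendsto.add _ tendsto_const_nhds
    apply Tendsto.const_mul
    apply Tendsto.mul_const
    apply Real.tendsto_exp_atBot.comp
    have h7 : Tendsto (fun T : ℝ => K * T) atTop atTop :=
      Tendsto.const_mul_atTop hK tendsto_id
    exact tendsto_neg_atTop_atBot.comp h7
  have hle : Real.log (F 0) ≤ l * (0 * D) + l * l / (4 * K) := by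
    apply ge_of_tendsto hlim
    filter_upwards [eventually_ge_atTop (0:ℝ)] with T hT
    exact hlog T hT
  have hle' : Real.log (F 0) ≤ l * l / (4 * K) := by
    simpa using hle
  have hF0eq : F 0 = ∑ x, G.m x * Real.exp (l * f x) := by
    apply Finset.sum_congr rfl
    intro x _
    rw [hu0]
  rw [← hF0eq]
  calc F 0 = Real.exp (Real.log (F 0)) := (Real.exp_log (hFpos 0)).symm
    _ ≤ Real.exp (l * l / (4 * K)) := Real.exp_le_exp.mpr hle'

end ConcAux

open ConcAux in
/-- **concentration of measure.** On a finite connected weighted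
graph with `m(V) = 1`, `Deg_max ≤ 1`, and `κ(x,y) ≥ K > 0` for all `x ≠ y`:
if `⟨f⟩ = 0` and `‖∇f‖_∞ ≤ 1`, then for every `r > 0`,
`m(f > r) ≤ e^{-K r²}`. -/
theorem concentration_of_measure
    {V : Type*} [Fintype V] (G : WeightedGraph V)
    (hconn : G.toSimpleGraph.Connected)
    (hm : ∑ x : V, G.m x = 1)
    (hDeg : ∀ x, G.Deg x ≤ 1)
    (K : ℝ) (hK : 0 < K)
    (hκ : ∀ x y : V, x ≠ y → K ≤ G.kappa x y)
    (f : V → ℝ)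
    (hmean : ∑ x : V, G.m x * f x = 0)
    (hgrad : G.gradNorm f ≤ 1) :
    ∀ r : ℝ, 0 < r →
      (∑ᶠ x ∈ {x : V | r < f x}, G.m x) ≤ Real.exp (-(K * r ^ 2)) := by
  intro r hr
  classical
  have hVne : Nonempty V := by
    by_contra h
    rw [not_nonempty_iff] at h
    rw [Finset.univ_eq_empty, Finset.sum_empty] at hm
    norm_num at hm
  rcases subsingleton_or_nontrivial V with hsub | hnt
  · -- trivial one-point case
    obtain ⟨x0⟩ := hVne
    have huniv : (Finset.univ : Finset V) = {x0} := by
      ext z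
      simp [Subsingleton.elim z x0]
    rw [huniv, Finset.sum_singleton] at hm hmean
    have hf0 : f x0 = 0 := by
      have := G.m_pos x0
      nlinarith
    have hempty : {x : V | r < f x} = (∅ : Set V) := by
      ext z
      simp only [Set.mem_setOf_eq, Set.mem_empty_iff_false, iff_false, not_lt]
      rw [Subsingleton.elim z x0, hf0]
      exact hr.le
    rw [hempty]
    rw [finsum_mem_empty]
    positivity
  · -- main case
    set l : ℝ := 2 * K * r with hl
    have hl0 : 0 ≤ l := by positivity
    have hherbst := exp_moment_bound G hconn hm hDeg hK hκ f hmean hgrad l hl0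
    set A : Finset V := Finset.univ.filter (fun x => r < f x) with hA
    have hset : {x : V | r < f x} = (↑A : Set V) := by
      ext z
      simp [hA]
    rw [hset, finsum_mem_coe_finset]
    have hstep1 : ∑ x ∈ A, G.m x ≤ ∑ x ∈ A, G.m x * Real.exp (l * (f x - r)) := by
      apply Finset.sum_le_sum
      intro x hx
      have hfx : r < f x := by
        rw [hA] at hx
        simpa using hx
      have h1 : (1:ℝ) ≤ Real.exp (l * (f x - r)) := by
        rw [← Real.exp_zero]
        apply Real.exp_le_exp.mpr
        have : 0 ≤ f x - r := by linarith
        positivity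
      calc G.m x = G.m x * 1 := (mul_one _).symm
        _ ≤ G.m x * Real.exp (l * (f x - r)) :=
            mul_le_mul_of_nonneg_left h1 (G.m_pos x).le
    have hstep2 : ∑ x ∈ A, G.m x * Real.exp (l * (f x - r))
        ≤ Real.exp (-(l * r)) * ∑ x : V, G.m x * Real.exp (l * f x) := by
      rw [Finset.mul_sum]
      have hsub : ∀ x : V, G.m x * Real.exp (l * (f x - r))
          = Real.exp (-(l * r)) * (G.m x * Real.exp (l * f x)) := by
        intro x
        have : Real.exp (-(l * r)) * Real.exp (l * f x) = Real.exp (l * (f x - r)) := by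
          rw [← Real.exp_add]
          congr 1
          ring
        calc G.m x * Real.exp (l * (f x - r))
            = G.m x * (Real.exp (-(l * r)) * Real.exp (l * f x)) := by rw [this]
          _ = Real.exp (-(l * r)) * (G.m x * Real.exp (l * f x)) := by ring
      calc ∑ x ∈ A, G.m x * Real.exp (l * (f x - r))
          = ∑ x ∈ A, Real.exp (-(l * r)) * (G.m x * Real.exp (l * f x)) :=
            Finset.sum_congr rfl (fun x _ => hsub x)
        _ ≤ ∑ x : V, Real.exp (-(l * r)) * (G.m x * Real.exp (l * f x)) := by
            apply Finset.sum_le_sum_of_subset_of_nonneg (Finset.subset_univ A)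
            intro x _ _
            have := (G.m_pos x).le
            positivity
    have hstep3 : Real.exp (-(l * r)) * ∑ x : V, G.m x * Real.exp (l * f x)
        ≤ Real.exp (-(l * r)) * Real.exp (l * l / (4 * K)) :=
      mul_le_mul_of_nonneg_left hherbst (Real.exp_nonneg _)
    have hfinal : Real.exp (-(l * r)) * Real.exp (l * l / (4 * K))
        = Real.exp (-(K * r ^ 2)) := by
      rw [← Real.exp_add]
      congr 1
      rw [hl]
      field_simp
      ring
    calc ∑ x ∈ A, G.m x ≤ ∑ x ∈ A, G.m x * Real.exp (l * (f x - r)) := hstep1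
      _ ≤ Real.exp (-(l * r)) * ∑ x : V, G.m x * Real.exp (l * f x) := hstep2
      _ ≤ Real.exp (-(l * r)) * Real.exp (l * l / (4 * K)) := hstep3
      _ = Real.exp (-(K * r ^ 2)) := hfinal
end
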